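/- Let k be a field of characteristic p and let Ū ⊆ SL₂(F_p) be the subgroup of upper unipotent matrices, ν its generator, t = [ν] - 1 ∈ k[Ū], and n_s = (0 1; -1 0). In the induced representation ind_{Ū}^{SL₂(F_p)} 1_k, the characteristic function χ_Ū of Ū satisfies t^{p-1} n_s⁻¹ χ_Ū = T_{n_s} χ_Ū, where T_{n_s} is the Hecke operator of the double coset Ū n_s Ū. -/

import Mathlib

/-- The upper unipotent element `(1 a; 0 1)` of `SL₂(F_p)`. -/
def nuEl (p : ℕ) (a : ZMod p) : Matrix.SpecialLinearGroup (Fin 2) (ZMod p) :=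
  ⟨!![1, a; 0, 1], by norm_num [Matrix.det_fin_two_of]⟩

/-- The element `n_s = (0 1; -1 0)` of `SL₂(F_p)`. -/
def nsEl (p : ℕ) : Matrix.SpecialLinearGroup (Fin 2) (ZMod p) :=
  ⟨!![0, 1; -1, 0], by norm_num [Matrix.det_fin_two_of]⟩

/-- The upper unipotent subgroup `Ū` of `SL₂(F_p)`, as a set. -/
def Uset (p : ℕ) : Set (Matrix.SpecialLinearGroup (Fin 2) (ZMod p)) :=
  Set.range (nuEl p)

/-- The characteristic function of `Ū`. -/
noncomputable def chiU (p : ℕ) (k : Type*) [Field k] :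
    Matrix.SpecialLinearGroup (Fin 2) (ZMod p) → k :=
  Set.indicator (Uset p) 1

/-- The right translation operator `(g • f)(x) = f(x g)` on functions on `SL₂(F_p)`. -/
def Rop (p : ℕ) (k : Type*) [Field k] (g : Matrix.SpecialLinearGroup (Fin 2) (ZMod p)) :
    (Matrix.SpecialLinearGroup (Fin 2) (ZMod p) → k) →ₗ[k]
      (Matrix.SpecialLinearGroup (Fin 2) (ZMod p) → k) :=
  LinearMap.funLeft k k fun x => x * g

/-- The double coset `Ū n_s Ū`, as a set. -/
def UnsU (p : ℕ) : Set (Matrix.SpecialLinearGroup (Fin 2) (ZMod p)) :=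
  {g | ∃ u v, u ∈ Uset p ∧ v ∈ Uset p ∧ g = u * nsEl p * v}

section Aux
open Matrix Finset Polynomial

variable (p : ℕ)

lemma nuEl_mul (a b : ZMod p) : nuEl p a * nuEl p b = nuEl p (a + b) := by
  apply Subtype.ext
  rw [Matrix.SpecialLinearGroup.coe_mul]
  show !![1, a; 0, 1] * !![1, b; 0, 1] = _
  rw [Matrix.mul_fin_two]
  norm_num [nuEl, add_comm]

lemma nuEl_zero : nuEl p 0 = 1 := by
  apply Subtype.ext
  show !![(1 : ZMod p), 0; 0, 1] = _
  norm_num [Matrix.SpecialLinearGroup.coe_one]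
  exact (Matrix.one_fin_two).symm

lemma nuEl_inv (a : ZMod p) : (nuEl p a)⁻¹ = nuEl p (-a) := by
  apply inv_eq_of_mul_eq_one_right
  rw [nuEl_mul, add_neg_cancel, nuEl_zero]

lemma nsEl_inv : (nsEl p)⁻¹ =
    (⟨!![0, -1; 1, 0], by norm_num [Matrix.det_fin_two_of]⟩ :
      Matrix.SpecialLinearGroup (Fin 2) (ZMod p)) := by
  apply inv_eq_of_mul_eq_one_right
  apply Subtype.ext
  erw [Matrix.SpecialLinearGroup.coe_mul]
  show !![(0 : ZMod p), 1; -1, 0] * !![0, -1; 1, 0] = _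
  rw [Matrix.mul_fin_two]
  norm_num [Matrix.SpecialLinearGroup.coe_one]
  exact (Matrix.one_fin_two).symm

lemma conj_coe (d : ZMod p) :
    ((nsEl p * nuEl p d * (nsEl p)⁻¹ : Matrix.SpecialLinearGroup (Fin 2) (ZMod p)) :
      Matrix (Fin 2) (Fin 2) (ZMod p)) = !![1, 0; -d, 1] := by
  rw [nsEl_inv]
  erw [Matrix.SpecialLinearGroup.coe_mul, Matrix.SpecialLinearGroup.coe_mul]
  show !![(0 : ZMod p), 1; -1, 0] * !![1, d; 0, 1] * !![0, -1; 1, 0] = _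
  rw [Matrix.mul_fin_two, Matrix.mul_fin_two]
  norm_num

lemma key_iff (b d : ZMod p) :
    nuEl p b * nsEl p * nuEl p d * (nsEl p)⁻¹ ∈ Uset p ↔ d = 0 := by
  constructor
  · rintro ⟨e, he⟩
    have h2 : nsEl p * nuEl p d * (nsEl p)⁻¹ = (nuEl p b)⁻¹ * nuEl p e := by
      rw [he]; group
    rw [nuEl_inv, nuEl_mul] at h2
    have hm : ((nsEl p * nuEl p d * (nsEl p)⁻¹ :
        Matrix.SpecialLinearGroup (Fin 2) (ZMod p)) :
        Matrix (Fin 2) (Fin 2) (ZMod p)) = !![1, -b + e; 0, 1] :=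
      congrArg _ h2
    rw [conj_coe] at hm
    have h3 := congrFun (congrFun hm 1) 0
    simpa [neg_eq_zero] using h3
  · rintro rfl
    rw [nuEl_zero, mul_one, mul_assoc, mul_inv_cancel, mul_one]
    exact ⟨b, rfl⟩

lemma UnsU_mul_nuEl (h : Matrix.SpecialLinearGroup (Fin 2) (ZMod p)) (a : ZMod p) :
    h * nuEl p a ∈ UnsU p ↔ h ∈ UnsU p := by
  constructor
  · rintro ⟨u, v, hu, ⟨c, rfl⟩, hg⟩
    refine ⟨u, nuEl p (c + -a), hu, ⟨_, rfl⟩, ?_⟩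
    have hh : h = u * nsEl p * nuEl p c * (nuEl p a)⁻¹ := by
      rw [← hg]; group
    rw [hh, nuEl_inv, mul_assoc (u * nsEl p), nuEl_mul]
  · rintro ⟨u, v, hu, ⟨c, rfl⟩, rfl⟩
    exact ⟨u, nuEl p (c + a), hu, ⟨_, rfl⟩,
      by rw [mul_assoc (u * nsEl p), nuEl_mul]⟩

variable (k : Type*) [Field k]

lemma rop_mul (g h : Matrix.SpecialLinearGroup (Fin 2) (ZMod p)) :
    Rop p k (g * h) = Rop p k g * Rop p k h := by
  ext f x
  simp [Rop, mul_assoc]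

lemma rop_one : Rop p k 1 = 1 := by
  ext f x
  simp [Rop]

lemma rop_pow (g : Matrix.SpecialLinearGroup (Fin 2) (ZMod p)) (n : ℕ) :
    Rop p k g ^ n = Rop p k (g ^ n) := by
  induction n with
  | zero => simp [rop_one]
  | succ n ih => rw [pow_succ, pow_succ, ih, ← rop_mul]

lemma nuEl_pow (n : ℕ) : nuEl p 1 ^ n = nuEl p (n : ZMod p) := by
  induction n with
  | zero => simp [nuEl_zero]
  | succ n ih =>
    rw [pow_succ, ih, nuEl_mul]
    push_cast
    ring_nf

lemma geom_poly [Fact p.Prime] [CharP k p] :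
    ((X : Polynomial k) - 1) ^ (p - 1) = ∑ i ∈ range p, (X : Polynomial k) ^ i := by
  have hp : p.Prime := Fact.out
  have h3 : ((X : Polynomial k) - 1) ≠ 0 := by
    simpa using Polynomial.X_sub_C_ne_zero (1 : k)
  apply mul_right_cancel₀ h3
  rw [geom_sum_mul, ← pow_succ, Nat.sub_add_cancel hp.one_le, sub_pow_char]
  simp

lemma sum_range_zmod [Fact p.Prime] {M : Type*} [AddCommMonoid M] (f : ZMod p → M) :
    ∑ i ∈ range p, f (i : ZMod p) = ∑ a : ZMod p, f a := by
  haveI : NeZero p := ⟨(Fact.out : p.Prime).ne_zero⟩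
  refine Finset.sum_bij (fun a _ => (a : ZMod p)) (fun a _ => Finset.mem_univ _)
    (fun a₁ h₁ a₂ h₂ h => ?_) (fun b _ => ⟨b.val, Finset.mem_range.mpr (ZMod.val_lt b),
      ZMod.natCast_rightInverse b⟩) (fun a _ => rfl)
  have := congrArg ZMod.val h
  rwa [ZMod.val_cast_of_lt (Finset.mem_range.mp h₁),
    ZMod.val_cast_of_lt (Finset.mem_range.mp h₂)] at this

end Aux

/-- In `ind_Ū^{SL₂(F_p)} 1_k`, one has `t^{p-1} n_s⁻¹ χ_Ū = T_{n_s} χ_Ū`, where `T_{n_s}`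
is the Hecke operator attached to the double coset `Ū n_s Ū`, computed via any set `S` of
representatives of the right cosets `Ū\SL₂(F_p)`. -/
theorem stmt5 (p : ℕ) [Fact p.Prime] (k : Type*) [Field k] [CharP k p]
    (S : Finset (Matrix.SpecialLinearGroup (Fin 2) (ZMod p)))
    (hS : ∀ g : Matrix.SpecialLinearGroup (Fin 2) (ZMod p),
      ∃! s, s ∈ S ∧ ∃ u ∈ Uset p, g = u * s) :
    (((Rop p k (nuEl p 1) - LinearMap.id :
        Module.End k (Matrix.SpecialLinearGroup (Fin 2) (ZMod p) → k)) ^ (p - 1))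
      ((Rop p k (nsEl p)⁻¹) (chiU p k)))
      = fun h => ∑ x ∈ S, Set.indicator (UnsU p) 1 (h * x⁻¹) * chiU p k x := by
  classical
  set T : Module.End k (Matrix.SpecialLinearGroup (Fin 2) (ZMod p) → k) :=
    Rop p k (nuEl p 1) with hT
  -- Step 1: the operator identity (T - 1)^(p-1) = ∑_{i<p} T^i
  have hEnd : (T - LinearMap.id) ^ (p - 1) = ∑ i ∈ Finset.range p, T ^ i := by
    have h := congrArg (Polynomial.aeval T) (geom_poly p k)
    simpa [map_pow, map_sub, map_sum, Module.End.one_eq_id] using h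
  rw [hEnd]
  -- Step 2: compute the left side pointwise
  funext h
  have hL : ((∑ i ∈ Finset.range p, T ^ i) ((Rop p k (nsEl p)⁻¹) (chiU p k))) h
      = ∑ a : ZMod p, chiU p k (h * nuEl p a * (nsEl p)⁻¹) := by
    rw [LinearMap.sum_apply]
    rw [← sum_range_zmod p (fun a => chiU p k (h * nuEl p a * (nsEl p)⁻¹))]
    simp only [Finset.sum_apply]
    refine Finset.sum_congr rfl fun i _ => ?_
    rw [hT, rop_pow, nuEl_pow]
    simp [Rop, mul_assoc]
  rw [hL]
  -- Step 3: identify the right side with the indicator of UnsU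
  obtain ⟨s₀, ⟨hs₀S, u₀, hu₀, h1u⟩, huniq⟩ := hS 1
  have hs₀U : s₀ ∈ Uset p := by
    obtain ⟨a, rfl⟩ := hu₀
    exact ⟨-a, by rw [← nuEl_inv]; exact inv_eq_of_mul_eq_one_right h1u.symm⟩
  have huniq' : ∀ x ∈ S, x ∈ Uset p → x = s₀ := by
    rintro x hxS ⟨a, rfl⟩
    refine huniq _ ⟨hxS, nuEl p (-a), ⟨-a, rfl⟩, ?_⟩
    rw [nuEl_mul, neg_add_cancel, nuEl_zero]
  have hR : ∑ x ∈ S, Set.indicator (UnsU p) 1 (h * x⁻¹) * chiU p k x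
      = Set.indicator (UnsU p)
        (1 : Matrix.SpecialLinearGroup (Fin 2) (ZMod p) → k) h := by
    rw [Finset.sum_eq_single s₀]
    · have hchi : chiU p k s₀ = 1 := by
        simp only [chiU, Set.indicator_of_mem hs₀U, Pi.one_apply]
      rw [hchi, mul_one]
      obtain ⟨a, ha⟩ := hs₀U
      rw [← ha, nuEl_inv]
      by_cases hmem : h ∈ UnsU p
      · rw [Set.indicator_of_mem hmem,
          Set.indicator_of_mem ((UnsU_mul_nuEl p h (-a)).mpr hmem)]
        rfl
      · rw [Set.indicator_of_notMem hmem,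
          Set.indicator_of_notMem (fun hc => hmem ((UnsU_mul_nuEl p h (-a)).mp hc))]
    · intro x hx hne
      have hxU : x ∉ Uset p := fun hxU => hne (huniq' x hx hxU)
      rw [chiU, Set.indicator_of_notMem hxU, mul_zero]
    · intro hs
      exact absurd hs₀S hs
  rw [hR]
  -- Step 4: the pointwise identity
  by_cases hmem : h ∈ UnsU p
  · obtain ⟨u, v, ⟨b, rfl⟩, ⟨c, rfl⟩, rfl⟩ := hmem
    have hmem' : nuEl p b * nsEl p * nuEl p c ∈ UnsU p :=
      ⟨_, _, ⟨b, rfl⟩, ⟨c, rfl⟩, rfl⟩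
    rw [Set.indicator_of_mem hmem', Pi.one_apply]
    have hterm : ∀ a : ZMod p,
        chiU p k (nuEl p b * nsEl p * nuEl p c * nuEl p a * (nsEl p)⁻¹)
          = if a = -c then 1 else 0 := by
      intro a
      rw [mul_assoc (nuEl p b * nsEl p), nuEl_mul]
      by_cases hh : a = -c
      · subst hh
        rw [if_pos rfl]
        have : (c : ZMod p) + -c = 0 := add_neg_cancel c
        rw [this]
        simp only [chiU, Set.indicator_of_mem ((key_iff p b 0).mpr rfl), Pi.one_apply]
      · rw [if_neg hh]
        have hne : (c : ZMod p) + a ≠ 0 := fun h0 => hh (eq_neg_of_add_eq_zero_right h0)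
        simp only [chiU]
        rw [Set.indicator_of_notMem (fun hc => hne ((key_iff p b (c + a)).mp hc))]
    rw [Finset.sum_congr rfl (fun a _ => hterm a)]
    simp
  · rw [Set.indicator_of_notMem hmem]
    refine Finset.sum_eq_zero fun a _ => ?_
    simp only [chiU]
    refine Set.indicator_of_notMem (fun hc => hmem ?_) _
    obtain ⟨e, he⟩ := hc
    have hh : h = nuEl p e * nsEl p * nuEl p (-a) := by
      rw [← nuEl_inv, he]; group
    exact ⟨_, _, ⟨e, rfl⟩, ⟨-a, rfl⟩, hh⟩
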